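/- Let n ≥ 1, let 0 < ε, and let A ∈ ℝ^{n×(n+1)} be the matrix with columns indexed 0,1,…,n whose entries are A(i,0) = 1 and A(i,i) = ε for every row i ∈ {1,…,n}, all other entries being 0. Then the characteristic polynomial of A A^T equals (x − (n + ε²)) · (x − ε²)^{n−1}; in particular, the largest singular value of A is √(n+ε²) and all other singular values equal ε. -/

import Mathlib

open Matrix BigOperators

private theorem charpoly_ones_add_smul (n : ℕ) (hn : 1 ≤ n) (ε : ℝ)
    (M : Matrix (Fin n) (Fin n) ℝ)
    (hM : M = Matrix.of (fun i j => (1:ℝ) + if i = j then ε^2 else 0)) :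
    M.charpoly = (Polynomial.X - Polynomial.C ((n : ℝ) + ε^2)) *
        (Polynomial.X - Polynomial.C (ε^2))^(n - 1) := by
  classical
  open Polynomial in
  set d : ℝ[X] := X - C (ε^2) with hd
  have hcm : charmatrix M = d • (1 : Matrix (Fin n) (Fin n) ℝ[X])
      + Matrix.replicateCol Unit (fun _ : Fin n => (-1 : ℝ[X])) * Matrix.replicateRow Unit (fun _ : Fin n => (1:ℝ[X])) := by
    ext i j
    by_cases h : i = j <;>
      simp [charmatrix_apply, hM, h, Matrix.one_apply, Matrix.mul_apply, d, C_add, sub_sub] <;>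
      ring
  let F := FractionRing ℝ[X]
  let f : ℝ[X] →+* F := algebraMap ℝ[X] F
  have hinj : Function.Injective f := IsFractionRing.injective _ _
  apply hinj
  have hd0 : d ≠ 0 := X_sub_C_ne_zero _
  have hc0 : f d ≠ 0 := fun h => hd0 (hinj (by simpa using h))
  rw [Matrix.charpoly, hcm]
  rw [f.map_det]
  rw [RingHom.mapMatrix_apply]
  have hmap : (d • (1 : Matrix (Fin n) (Fin n) ℝ[X])
      + Matrix.replicateCol Unit (fun _ : Fin n => (-1 : ℝ[X])) * Matrix.replicateRow Unit (fun _ : Fin n => (1:ℝ[X]))).map f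
      = f d • (1 : Matrix (Fin n) (Fin n) F)
      + Matrix.replicateCol Unit (fun _ : Fin n => (-1 : F)) * Matrix.replicateRow Unit (fun _ : Fin n => (1:F)) := by
    ext i j
    simp [Matrix.one_apply, Matrix.mul_apply, apply_ite f]
  rw [hmap]
  set c : F := f d with hc
  have hfact : c • (1 : Matrix (Fin n) (Fin n) F)
      + Matrix.replicateCol Unit (fun _ : Fin n => (-1 : F)) * Matrix.replicateRow Unit (fun _ : Fin n => (1:F))
      = c • ((1 : Matrix (Fin n) (Fin n) F)
        + Matrix.replicateCol Unit (fun _ : Fin n => (-c⁻¹ : F)) * Matrix.replicateRow Unit (fun _ : Fin n => (1:F))) := by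
    rw [smul_add]
    congr 1
    ext i j
    simp [Matrix.mul_apply]
    linear_combination (mul_inv_cancel₀ hc0)
  rw [hfact, Matrix.det_smul, Matrix.det_one_add_replicateCol_mul_replicateRow]
  have hdot : (fun _ : Fin n => (1:F)) ⬝ᵥ (fun _ : Fin n => (-c⁻¹ : F)) = -(n : F) * c⁻¹ := by
    simp [dotProduct]; ring
  rw [hdot]
  have hrhs : f ((X - C ((n : ℝ) + ε^2)) * (X - C (ε^2))^(n - 1))
      = (c - n) * c^(n-1) := by
    rw [_root_.map_mul, map_pow, ← hd, hc]
    congr 1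
    have : (X - C ((n : ℝ) + ε^2)) = d - (n : ℝ[X]) := by
      rw [hd, C_add, Polynomial.C_eq_natCast]
      ring
    rw [this, map_sub, map_natCast]
  rw [hrhs, Fintype.card_fin]
  obtain ⟨m, rfl⟩ : ∃ m, n = m + 1 := ⟨n - 1, (Nat.succ_pred_eq_of_pos hn).symm⟩
  simp only [Nat.add_sub_cancel]
  rw [pow_succ]
  linear_combination (-(((m + 1 : ℕ) : F)) * c ^ m) * (mul_inv_cancel₀ hc0)

/-- For the n×(n+1) matrix A with A(i,0) = 1, A(i,i) = ε and zeros elsewhere,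
the characteristic polynomial of A Aᵀ equals (x − (n+ε²))·(x − ε²)^{n−1}. -/
theorem charpoly_lower_bound_matrix (n : ℕ) (hn : 1 ≤ n) (ε : ℝ) (hε : 0 < ε)
    (A : Matrix (Fin n) (Fin (n + 1)) ℝ)
    (hA : ∀ i j, A i j = if (j : ℕ) = 0 then 1 else if (j : ℕ) = (i : ℕ) + 1 then ε else 0) :
    (A * Aᵀ).charpoly
      = (Polynomial.X - Polynomial.C ((n : ℝ) + ε^2)) *
          (Polynomial.X - Polynomial.C (ε^2))^(n - 1) := by
  apply charpoly_ones_add_smul n hn ε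
  ext i j
  simp only [Matrix.mul_apply, Matrix.transpose_apply, hA, Matrix.of_apply]
  rw [Fin.sum_univ_succ]
  simp [Fin.val_succ, mul_ite, ite_mul, Fin.ext_iff, Finset.sum_ite_eq, pow_two, eq_comm]
  rw [Finset.sum_eq_single j] <;> simp +contextual [Fin.ext_iff, eq_comm]
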